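/- arXiv:1812.11538 — 6 statements merged into one kernel-verified Lean document; each statement's English description precedes it below -/
import Mathlib

section
/- Let x : ℝ → ℝ³ solve the closed-loop system ẋ₁ = -x₂x₃, ẋ₂ = x₁x₃ - γ(½(x₁²+x₂²) - β)x₂, ẋ₃ = -x₂²x₃ with γ > 0, β ≥ 0. Then for all t ≥ 0, ½(x₁(t)²+x₂(t)²) = e^{-γ∫₀ᵗ x₂(s)² ds} · ½(x₁(0)²+x₂(0)²) + β(1 - e^{-γ∫₀ᵗ x₂(s)² ds}). -/
/-- explicit solution formula for the partial energy
`H_ℓ(t) = ½(x₁(t)²+x₂(t)²)` of the closed-loop nonholonomic integrator. -/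
theorem energy_solution_formula
    (γ β : ℝ) (hγ : 0 < γ) (hβ : 0 ≤ β) (x₁ x₂ x₃ : ℝ → ℝ)
    (h1 : ∀ t, HasDerivAt x₁ (-(x₂ t) * x₃ t) t)
    (h2 : ∀ t, HasDerivAt x₂
      (x₁ t * x₃ t - γ * ((1/2) * ((x₁ t)^2 + (x₂ t)^2) - β) * x₂ t) t)
    (h3 : ∀ t, HasDerivAt x₃ (-(x₂ t)^2 * x₃ t) t) :
    ∀ t ≥ (0:ℝ),
      (1/2) * ((x₁ t)^2 + (x₂ t)^2)
        = Real.exp (-γ * ∫ s in (0:ℝ)..t, (x₂ s)^2) * ((1/2) * ((x₁ 0)^2 + (x₂ 0)^2))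
          + β * (1 - Real.exp (-γ * ∫ s in (0:ℝ)..t, (x₂ s)^2)) := by
  have hc2 : Continuous x₂ := continuous_iff_continuousAt.mpr fun t => (h2 t).continuousAt
  have hc2sq : Continuous (fun s => (x₂ s)^2) := by continuity
  set F : ℝ → ℝ := fun t => ∫ s in (0:ℝ)..t, (x₂ s)^2 with hF
  have hFd : ∀ t, HasDerivAt F ((x₂ t)^2) t := by
    intro t
    exact intervalIntegral.integral_hasDerivAt_right
      (hc2sq.intervalIntegrable 0 t)
      hc2sq.aestronglyMeasurable.stronglyMeasurableAtFilter
      hc2sq.continuousAt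
  set H : ℝ → ℝ := fun t => (1/2) * ((x₁ t)^2 + (x₂ t)^2) with hH
  have hHd : ∀ t, HasDerivAt H (-γ * (H t - β) * (x₂ t)^2) t := by
    intro t
    have := (((h1 t).pow 2).add ((h2 t).pow 2)).const_mul (1/2 : ℝ)
    refine HasDerivAt.congr_deriv this ?_
    simp only [hH]
    ring
  set G : ℝ → ℝ := fun t => (H t - β) * Real.exp (γ * F t) with hG
  have hGd : ∀ t, HasDerivAt G 0 t := by
    intro t
    have hE : HasDerivAt (fun t => Real.exp (γ * F t)) (γ * (x₂ t)^2 * Real.exp (γ * F t)) t := by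
      have := (((hFd t).const_mul γ).exp)
      convert this using 1
      ring
    have := ((hHd t).sub_const β).mul hE
    refine HasDerivAt.congr_deriv this ?_
    ring
  have hGc : ∀ t, G t = G 0 := by
    intro t
    have : ∀ s, deriv G s = 0 := fun s => (hGd s).deriv
    have hGdiff : Differentiable ℝ G := fun s => (hGd s).differentiableAt
    exact is_const_of_deriv_eq_zero hGdiff this t 0
  intro t _
  have hG0 : G 0 = H 0 - β := by
    simp only [hG, hF, intervalIntegral.integral_same, mul_zero, Real.exp_zero, mul_one]
  have ht := hGc t
  rw [hG0] at ht
  have hEpos : Real.exp (γ * F t) ≠ 0 := (Real.exp_pos _).ne'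
  have hHt : H t - β = (H 0 - β) * Real.exp (-(γ * F t)) := by
    rw [Real.exp_neg]
    field_simp
    simpa [hG] using ht
  have : H t = Real.exp (-γ * F t) * H 0 + β * (1 - Real.exp (-γ * F t)) := by
    have hneg : -γ * F t = -(γ * F t) := by ring
    rw [hneg]
    linarith [hHt, Real.exp_neg (γ * F t)]
  simpa [hH, hF] using this
end

section
/- Let x : ℝ → ℝ³ solve the closed-loop system ẋ₁ = -x₂x₃, ẋ₂ = x₁x₃ - γ(½(x₁²+x₂²) - β)x₂, ẋ₃ = -x₂²x₃ with γ > 0, β ≥ 0. If x₁(0)² + x₂(0)² > 0, then x₁(t)² + x₂(t)² > 0 for every t ≥ 0. -/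
/-- if the partial energy starts positive it stays positive. -/
theorem energy_stays_positive
    (γ β : ℝ) (hγ : 0 < γ) (hβ : 0 ≤ β) (x₁ x₂ x₃ : ℝ → ℝ)
    (h1 : ∀ t, HasDerivAt x₁ (-(x₂ t) * x₃ t) t)
    (h2 : ∀ t, HasDerivAt x₂
      (x₁ t * x₃ t - γ * ((1/2) * ((x₁ t)^2 + (x₂ t)^2) - β) * x₂ t) t)
    (h3 : ∀ t, HasDerivAt x₃ (-(x₂ t)^2 * x₃ t) t)
    (h0 : 0 < (x₁ 0)^2 + (x₂ 0)^2) :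
    ∀ t ≥ (0:ℝ), 0 < (x₁ t)^2 + (x₂ t)^2 := by
  set H : ℝ → ℝ := fun t => (x₁ t)^2 + (x₂ t)^2 with hHdef
  have hH : ∀ t, HasDerivAt H (-(γ * (x₂ t)^2) * H t + 2*γ*β*(x₂ t)^2) t := by
    intro t
    have := ((h1 t).pow 2).add ((h2 t).pow 2)
    refine this.congr_deriv ?_
    simp only [hHdef]
    ring
  have hx₂cont : Continuous x₂ :=
    Differentiable.continuous (fun t => (h2 t).differentiableAt)
  have hcont : Continuous (fun s => γ * (x₂ s)^2) :=
    continuous_const.mul (hx₂cont.pow 2)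
  set F : ℝ → ℝ := fun t => ∫ s in (0:ℝ)..t, γ * (x₂ s)^2 with hFdef
  have hF : ∀ t, HasDerivAt F (γ * (x₂ t)^2) t := by
    intro t
    exact (hcont.integral_hasStrictDerivAt 0 t).hasDerivAt
  set u : ℝ → ℝ := fun t => Real.exp (F t) * H t with hudef
  have hu : ∀ t, HasDerivAt u (Real.exp (F t) * (2*γ*β*(x₂ t)^2)) t := by
    intro t
    have := ((hF t).exp).mul (hH t)
    refine this.congr_deriv ?_
    ring
  have hmono : Monotone u := by
    apply monotone_of_deriv_nonneg
    · exact fun t => (hu t).differentiableAt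
    · intro t
      rw [(hu t).deriv]
      have := Real.exp_pos (F t)
      positivity
  intro t ht
  have h1' : u 0 ≤ u t := hmono ht
  have h2' : u 0 = H 0 := by
    simp [hudef, hFdef]
  have h3' : 0 < Real.exp (F t) * H t := by
    have hH0 : H 0 = (x₁ 0)^2 + (x₂ 0)^2 := rfl
    have : (0:ℝ) < u t := by rw [h2', hH0] at h1'; linarith [h0]
    exact this
  have hexp := Real.exp_pos (F t)
  rcases mul_pos_iff.mp h3' with ⟨_, h⟩ | ⟨h, _⟩
  · exact h
  · linarith
end

section
/- Let x : ℝ → ℝ³ solve the closed-loop system ẋ₁ = -x₂x₃, ẋ₂ = x₁x₃ - γ(½(x₁²+x₂²) - β)x₂, ẋ₃ = -x₂²x₃ with γ > 0, β ≥ 0, and suppose x₃(0) ≠ 0 and ½(x₁(0)²+x₂(0)²) ≠ β. Then the following are equivalent: (i) x₃(t) → 0 as t → ∞; (ii) ½(x₁(t)²+x₂(t)²) → β as t → ∞; (iii) ∫₀^∞ x₂(s)² ds = ∞. -/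
open Filter Real

private lemma key_equiv {I : ℝ → ℝ} {c k : ℝ} (hc : c ≠ 0) (hk : 0 < k) :
    Tendsto (fun t => c * Real.exp (-(k * I t))) atTop (nhds 0) ↔ Tendsto I atTop atTop := by
  have h1 : Tendsto (fun t => c * Real.exp (-(k * I t))) atTop (nhds 0)
      ↔ Tendsto (fun t => Real.exp (-(k * I t))) atTop (nhds 0) := by
    constructor
    · intro h
      have := h.const_mul c⁻¹
      simpa [inv_mul_cancel_left₀ hc] using this
    · intro h
      simpa using h.const_mul c
  rw [h1, Real.tendsto_exp_comp_nhds_zero]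
  have h2 : Tendsto (fun t => -(k * I t)) atTop atBot
      ↔ Tendsto (fun t => k * I t) atTop atTop := tendsto_neg_atBot_iff
  rw [h2, tendsto_const_mul_atTop_iff]
  simp [hk, hk.not_gt]

/-- equivalence of `x₃ → 0`, `H_ℓ → β`, and `∫₀^∞ x₂² = ∞`. -/
theorem convergence_equivalences
    (γ β : ℝ) (hγ : 0 < γ) (hβ : 0 ≤ β) (x₁ x₂ x₃ : ℝ → ℝ)
    (h1 : ∀ t, HasDerivAt x₁ (-(x₂ t) * x₃ t) t)
    (h2 : ∀ t, HasDerivAt x₂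
      (x₁ t * x₃ t - γ * ((1/2) * ((x₁ t)^2 + (x₂ t)^2) - β) * x₂ t) t)
    (h3 : ∀ t, HasDerivAt x₃ (-(x₂ t)^2 * x₃ t) t)
    (hx30 : x₃ 0 ≠ 0)
    (hH0 : (1/2) * ((x₁ 0)^2 + (x₂ 0)^2) ≠ β) :
    (Filter.Tendsto x₃ Filter.atTop (nhds 0)
      ↔ Filter.Tendsto (fun t => ∫ s in (0:ℝ)..t, (x₂ s)^2) Filter.atTop Filter.atTop)
    ∧ (Filter.Tendsto (fun t => (1/2) * ((x₁ t)^2 + (x₂ t)^2)) Filter.atTop (nhds β)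
      ↔ Filter.Tendsto (fun t => ∫ s in (0:ℝ)..t, (x₂ s)^2) Filter.atTop Filter.atTop) := by
  set H : ℝ → ℝ := fun t => (1/2) * ((x₁ t)^2 + (x₂ t)^2) with hHdef
  set I : ℝ → ℝ := fun t => ∫ s in (0:ℝ)..t, (x₂ s)^2 with hIdef
  have hcont2 : Continuous x₂ :=
    Differentiable.continuous (fun t => (h2 t).differentiableAt)
  have hcontsq : Continuous (fun t => (x₂ t)^2) := hcont2.pow 2
  -- I has derivative x₂²
  have hI : ∀ t, HasDerivAt I ((x₂ t)^2) t := by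
    intro t
    exact intervalIntegral.integral_hasDerivAt_right
      (hcontsq.intervalIntegrable 0 t)
      (hcontsq.stronglyMeasurableAtFilter _ _)
      hcontsq.continuousAt
  have hI0 : I 0 = 0 := intervalIntegral.integral_same
  -- H has derivative -γ (H - β) x₂²
  have hH : ∀ t, HasDerivAt H (-(γ * (H t - β)) * (x₂ t)^2) t := by
    intro t
    have := (((h1 t).pow 2).add ((h2 t).pow 2)).const_mul (1/2 : ℝ)
    refine this.congr_deriv ?_
    simp only [hHdef]
    ring
  -- x₃ t = x₃ 0 * exp(-(1 * I t))
  have hx3eq : ∀ t, x₃ t = x₃ 0 * Real.exp (-(1 * I t)) := by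
    have hF : ∀ t, HasDerivAt (fun t => x₃ t * Real.exp (I t)) 0 t := by
      intro t
      have := (h3 t).mul ((hI t).exp)
      refine this.congr_deriv ?_
      ring
    have hc := is_const_of_deriv_eq_zero
      (fun t => (hF t).differentiableAt) (fun t => (hF t).deriv)
    intro t
    have h := hc t 0
    simp only [hI0, Real.exp_zero, mul_one] at h
    have hepos := Real.exp_ne_zero (I t)
    field_simp [Real.exp_neg] at h ⊢
    rw [← h, mul_assoc, ← Real.exp_add]; simp
  -- H t - β = (H 0 - β) * exp(-(γ * I t))
  have hHeq : ∀ t, H t - β = (H 0 - β) * Real.exp (-(γ * I t)) := by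
    have hG : ∀ t, HasDerivAt (fun t => (H t - β) * Real.exp (γ * I t)) 0 t := by
      intro t
      have := ((hH t).sub_const β).mul (((hI t).const_mul γ).exp)
      refine this.congr_deriv ?_
      ring
    have hc := is_const_of_deriv_eq_zero
      (fun t => (hG t).differentiableAt) (fun t => (hG t).deriv)
    intro t
    have h := hc t 0
    simp only [hI0, mul_zero, Real.exp_zero, mul_one] at h
    have hepos := Real.exp_ne_zero (γ * I t)
    field_simp [Real.exp_neg] at h ⊢
    rw [← h, mul_assoc, ← Real.exp_add]; simp
  have hH0' : H 0 - β ≠ 0 := sub_ne_zero.mpr hH0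
  constructor
  · -- x₃ part
    rw [tendsto_congr hx3eq]
    exact key_equiv hx30 one_pos
  · -- H part
    rw [← tendsto_sub_nhds_zero_iff]
    have : (fun t => H t - β) = fun t => (H 0 - β) * Real.exp (-(γ * I t)) := by
      funext t; exact hHeq t
    rw [this]
    exact key_equiv hH0' hγ
end

section
/- For the case β = 0, γ = 1: define V(x) = ½(½(x₁²+x₂²))² + ½x₃². Along any solution of ẋ₁ = -x₂x₃, ẋ₂ = x₁x₃ - ½(x₁²+x₂²)x₂, ẋ₃ = -x₂²x₃, one has d/dt V(x(t)) = -2x₂(t)² V(x(t)), hence V(x(t)) = V(x(0)) e^{-2∫₀ᵗ x₂(s)² ds}. -/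
/-- for `β = 0, γ = 1`, `V = ½H_ℓ² + ½x₃²` satisfies
`V̇ = -2x₂² V`, hence `V(x(t)) = V(x(0)) e^{-2∫₀ᵗ x₂²}`. -/
theorem lyapunov_exponential_formula
    (x₁ x₂ x₃ : ℝ → ℝ)
    (h1 : ∀ t, HasDerivAt x₁ (-(x₂ t) * x₃ t) t)
    (h2 : ∀ t, HasDerivAt x₂
      (x₁ t * x₃ t - (1/2) * ((x₁ t)^2 + (x₂ t)^2) * x₂ t) t)
    (h3 : ∀ t, HasDerivAt x₃ (-(x₂ t)^2 * x₃ t) t) :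
    (∀ t, HasDerivAt
        (fun t => (1/2) * ((1/2) * ((x₁ t)^2 + (x₂ t)^2))^2 + (1/2) * (x₃ t)^2)
        (-2 * (x₂ t)^2 *
          ((1/2) * ((1/2) * ((x₁ t)^2 + (x₂ t)^2))^2 + (1/2) * (x₃ t)^2)) t)
    ∧ (∀ t, (1/2) * ((1/2) * ((x₁ t)^2 + (x₂ t)^2))^2 + (1/2) * (x₃ t)^2
        = ((1/2) * ((1/2) * ((x₁ 0)^2 + (x₂ 0)^2))^2 + (1/2) * (x₃ 0)^2)
          * Real.exp (-2 * ∫ s in (0:ℝ)..t, (x₂ s)^2)) := by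
  set V : ℝ → ℝ := fun t => (1/2) * ((1/2) * ((x₁ t)^2 + (x₂ t)^2))^2 + (1/2) * (x₃ t)^2 with hV
  have hVd : ∀ t, HasDerivAt V (-2 * (x₂ t)^2 * V t) t := by
    intro t
    have := ((((((h1 t).pow 2).add ((h2 t).pow 2)).const_mul ((1:ℝ)/2)).pow 2).const_mul ((1:ℝ)/2)).add
      (((h3 t).pow 2).const_mul ((1:ℝ)/2))
    refine this.congr_deriv ?_
    simp only [hV, Pi.add_apply, Pi.pow_apply, Pi.mul_apply]
    ring
  refine ⟨hVd, ?_⟩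
  have hc : Continuous fun s => (x₂ s)^2 := by
    have hd : Differentiable ℝ x₂ := fun t => (h2 t).differentiableAt
    exact hd.continuous.pow 2
  have hg : ∀ t, HasDerivAt (fun t => ∫ s in (0:ℝ)..t, (x₂ s)^2) ((x₂ t)^2) t := by
    intro t
    exact intervalIntegral.integral_hasDerivAt_right (hc.intervalIntegrable _ _)
      (hc.stronglyMeasurableAtFilter _ _) hc.continuousAt
  set g : ℝ → ℝ := fun t => ∫ s in (0:ℝ)..t, (x₂ s)^2 with hgdef
  have hF : ∀ t, HasDerivAt (fun t => V t * Real.exp (2 * g t)) 0 t := by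
    intro t
    have he : HasDerivAt (fun t => Real.exp (2 * g t)) (Real.exp (2 * g t) * (2 * (x₂ t)^2)) t :=
      (((hg t).const_mul 2).exp)
    have := (hVd t).mul he
    refine this.congr_deriv ?_
    ring
  have hconst : ∀ t, V t * Real.exp (2 * g t) = V 0 * Real.exp (2 * g 0) := by
    intro t
    have : ∀ s, deriv (fun t => V t * Real.exp (2 * g t)) s = 0 := fun s => (hF s).deriv
    have := is_const_of_deriv_eq_zero (fun s => (hF s).differentiableAt) this t 0
    exact this
  intro t
  have h0 : g 0 = 0 := by simp [hgdef]
  have := hconst t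
  rw [h0, mul_zero, Real.exp_zero, mul_one] at this
  have hexp : Real.exp (-2 * g t) = (Real.exp (2 * g t))⁻¹ := by
    rw [← Real.exp_neg]; ring_nf
  show V t = V 0 * Real.exp (-2 * g t)
  rw [hexp, ← this]
  field_simp
end

section
/- For the case β = 0, γ = 1: if x solves ẋ₁ = -x₂x₃, ẋ₂ = x₁x₃ - ½(x₁²+x₂²)x₂, ẋ₃ = -x₂²x₃ and ∫₀^∞ x₂(s)² ds = ∞, then x(t) → (0,0,0) as t → ∞. -/
open Filter Real

private lemma sq_tendsto_zero {f : ℝ → ℝ}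
    (h : Tendsto (fun t => (f t)^2) atTop (nhds 0)) :
    Tendsto f atTop (nhds 0) := by
  rw [tendsto_zero_iff_abs_tendsto_zero]
  have : Tendsto (fun t => Real.sqrt ((f t)^2)) atTop (nhds (Real.sqrt 0)) :=
    (Real.continuous_sqrt.continuousAt).tendsto.comp h
  simpa [Real.sqrt_sq_eq_abs, Function.comp_def] using this

/-- for `β = 0, γ = 1`, if `∫₀^∞ x₂² = ∞` then the state
converges to the origin. -/
theorem state_convergence_to_zero
    (x₁ x₂ x₃ : ℝ → ℝ)
    (h1 : ∀ t, HasDerivAt x₁ (-(x₂ t) * x₃ t) t)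
    (h2 : ∀ t, HasDerivAt x₂
      (x₁ t * x₃ t - (1/2) * ((x₁ t)^2 + (x₂ t)^2) * x₂ t) t)
    (h3 : ∀ t, HasDerivAt x₃ (-(x₂ t)^2 * x₃ t) t)
    (hdiv : Filter.Tendsto (fun t => ∫ s in (0:ℝ)..t, (x₂ s)^2)
      Filter.atTop Filter.atTop) :
    Filter.Tendsto (fun t => (x₁ t, x₂ t, x₃ t)) Filter.atTop
      (nhds ((0:ℝ), (0:ℝ), (0:ℝ))) := by
  set V : ℝ → ℝ := fun t => (1/8)*((x₁ t)^2+(x₂ t)^2)^2 + (1/2)*(x₃ t)^2 with hVdef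
  have hV : ∀ t, HasDerivAt V (-2*(x₂ t)^2 * V t) t := by
    intro t
    have := ((((((h1 t).pow 2).add ((h2 t).pow 2)).pow 2).const_mul (1/8:ℝ)).add
      (((h3 t).pow 2).const_mul (1/2:ℝ)))
    refine this.congr_deriv ?_
    simp only [hVdef, Pi.add_apply, Pi.pow_apply]
    ring
  have hx₂c : Continuous (fun s => (x₂ s)^2) :=
    ((continuous_iff_continuousAt.2 fun t => (h2 t).continuousAt).pow 2)
  set I : ℝ → ℝ := fun t => ∫ s in (0:ℝ)..t, (x₂ s)^2 with hIdef
  have hI : ∀ t, HasDerivAt I ((x₂ t)^2) t := fun t =>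
    (hx₂c.integral_hasStrictDerivAt 0 t).hasDerivAt
  set W : ℝ → ℝ := fun t => V t * Real.exp (2 * I t) with hWdef
  have hW : ∀ t, HasDerivAt W 0 t := by
    intro t
    have he : HasDerivAt (fun t => Real.exp (2 * I t))
        (Real.exp (2 * I t) * (2 * (x₂ t)^2)) t :=
      (((hI t).const_mul 2)).exp
    have := (hV t).mul he
    refine this.congr_deriv ?_
    ring
  have hWconst : ∀ t, W t = W 0 := by
    intro t
    have : ∀ s, deriv W s = 0 := fun s => (hW s).deriv
    have hdW : Differentiable ℝ W := fun s => (hW s).differentiableAt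
    exact (is_const_of_deriv_eq_zero hdW this) t 0
  have hVformula : ∀ t, V t = W 0 * Real.exp (-(2 * I t)) := by
    intro t
    rw [← hWconst t]
    show V t = V t * Real.exp (2 * I t) * Real.exp (-(2 * I t))
    rw [mul_assoc, ← Real.exp_add]
    simp
  have hVtend : Tendsto V atTop (nhds 0) := by
    have h2I : Tendsto (fun t => 2 * I t) atTop atTop := hdiv.const_mul_atTop two_pos
    have he : Tendsto (fun t => Real.exp (-(2 * I t))) atTop (nhds 0) :=
      Real.tendsto_exp_atBot.comp (tendsto_neg_atBot_iff.mpr h2I)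
    have := he.const_mul (W 0)
    simp only [mul_zero] at this
    exact Tendsto.congr (fun t => (hVformula t).symm) this
  have h8V : Tendsto (fun t => 8 * V t) atTop (nhds 0) := by
    simpa only [mul_zero] using hVtend.const_mul 8
  have h2V : Tendsto (fun t => 2 * V t) atTop (nhds 0) := by
    simpa only [mul_zero] using hVtend.const_mul 2
  have hr4 : Tendsto (fun t => (((x₁ t)^2 + (x₂ t)^2)^2)) atTop (nhds 0) :=
    squeeze_zero (fun t => by positivity)
      (fun t => by simp only [hVdef]; nlinarith [sq_nonneg (x₃ t)]) h8V
  have hr2 : Tendsto (fun t => ((x₁ t)^2 + (x₂ t)^2)) atTop (nhds 0) :=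
    sq_tendsto_zero hr4
  have hx1 : Tendsto x₁ atTop (nhds 0) := by
    apply sq_tendsto_zero
    exact squeeze_zero (fun t => sq_nonneg _)
      (fun t => by nlinarith [sq_nonneg (x₂ t)]) hr2
  have hx2 : Tendsto x₂ atTop (nhds 0) := by
    apply sq_tendsto_zero
    exact squeeze_zero (fun t => sq_nonneg _)
      (fun t => by nlinarith [sq_nonneg (x₁ t)]) hr2
  have hx3 : Tendsto x₃ atTop (nhds 0) := by
    apply sq_tendsto_zero
    exact squeeze_zero (fun t => sq_nonneg _)
      (fun t => by simp only [hVdef] at h2V ⊢; nlinarith [sq_nonneg ((x₁ t)^2 + (x₂ t)^2)]) h2V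
  exact hx1.prodMk_nhds (hx2.prodMk_nhds hx3)
end

section
/- Define the feedback u : ℝ³ → ℝ² by u(x) = (-x₂x₃, x₁x₃ - γ(½(x₁²+x₂²)-β)x₂) and S(x) = [[1,0],[0,1],[x₂,0]]. Then for all x ∈ ℝ³, S(x)·u(x) equals the port-Hamiltonian vector field F(x) = [[0,-x₃,0],[x₃,-γHˢ(x),0],[0,0,-x₂²]]·(x₁,x₂,x₃)ᵀ, where Hˢ(x) = ½(x₁²+x₂²)-β; i.e., the closed loop of the nonholonomic integrator under this feedback is exactly the pH system (3.6). -/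
/-- the EPD IDA-PBC feedback matches the nonholonomic integrator
to the target port-Hamiltonian vector field. -/
theorem feedback_matches_pH_form
    (γ β : ℝ) (hγ : 0 < γ) (hβ : 0 ≤ β) :
    ∀ x₁ x₂ x₃ : ℝ,
      (!![1, 0; 0, 1; x₂, 0] : Matrix (Fin 3) (Fin 2) ℝ).mulVec
          ![-(x₂ * x₃), x₁ * x₃ - γ * ((1/2) * (x₁^2 + x₂^2) - β) * x₂]
        = (!![0, -x₃, 0;
              x₃, -γ * ((1/2) * (x₁^2 + x₂^2) - β), 0;
              0, 0, -x₂^2] : Matrix (Fin 3) (Fin 3) ℝ).mulVec ![x₁, x₂, x₃] := by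
  intro x₁ x₂ x₃
  funext i
  fin_cases i <;>
    simp [Matrix.mulVec, dotProduct, Fin.sum_univ_succ] <;> ring
end
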